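/- Let θ > 0, let k be a positive integer, and let G be geometric on ℕ₀ with success probability k/(k+θ), i.e. P(G = m) = (k/(k+θ)) · (θ/(k+θ))^m. Then for every positive integer i, the i-th cumulant of G equals Li_{1-i}(θ/(k+θ)) = ∑_{b=1}^{i} S(i, b) · (θ/k)^b · (b-1)!, where S(i, b) is the Stirling number of the second kind. -/

import Mathlib

open MeasureTheory ProbabilityTheory
open scoped ENNReal NNReal

def stirling2 : ℕ → ℕ → ℕ
  | 0, 0 => 0 + 1
  | 0, _ + 1 => 0
  | _ + 1, 0 => 0
  | n + 1, k + 1 => (k + 1) * stirling2 n (k + 1) + stirling2 n k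

lemma stirling2_zero_right (n : ℕ) : stirling2 (n + 1) 0 = 0 := rfl

lemma stirling2_succ_succ (n k : ℕ) :
    stirling2 (n + 1) (k + 1) = (k + 1) * stirling2 n (k + 1) + stirling2 n k := rfl

lemma stirling2_eq_zero : ∀ {n b : ℕ}, n < b → stirling2 n b = 0
  | 0, 0, h => absurd h (lt_irrefl 0)
  | 0, _ + 1, _ => rfl
  | n + 1, 0, h => absurd h (by omega)
  | n + 1, b + 1, h => by
      have h1 : n < b + 1 := by omega
      have h2 : n < b := by omega
      simp [stirling2_succ_succ, stirling2_eq_zero h1, stirling2_eq_zero h2]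

lemma stirling2_pow (i m : ℕ) :
    m ^ i = ∑ b ∈ Finset.range (i + 1), stirling2 i b * m.descFactorial b := by
  induction i with
  | zero => simp [stirling2]
  | succ i ih =>
    have key : ∀ b, m * m.descFactorial b
        = m.descFactorial (b + 1) + b * m.descFactorial b := by
      intro b
      rcases le_or_gt b m with h | h
      · rw [Nat.descFactorial_succ, ← Nat.add_mul, Nat.sub_add_cancel h]
      · rw [Nat.descFactorial_eq_zero_iff_lt.2 h,
          Nat.descFactorial_eq_zero_iff_lt.2 (by omega)]
        simp
    have step1 : m ^ (i + 1)
        = ∑ b ∈ Finset.range (i + 1),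
            (stirling2 i b * m.descFactorial (b + 1)
              + stirling2 i b * (b * m.descFactorial b)) := by
      rw [pow_succ, ih, Finset.sum_mul]
      refine Finset.sum_congr rfl fun b _ => ?_
      rw [mul_assoc, mul_comm (Nat.descFactorial m b) m, key b, Nat.mul_add]
    rw [step1, Finset.sum_add_distrib]
    have hgtop : (i + 1) * stirling2 i (i + 1) * m.descFactorial (i + 1) = 0 := by
      rw [stirling2_eq_zero (Nat.lt_succ_self i), Nat.mul_zero, Nat.zero_mul]
    have hB : ∑ b ∈ Finset.range (i + 1), stirling2 i b * (b * m.descFactorial b)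
        = ∑ b ∈ Finset.range (i + 1),
            (b + 1) * stirling2 i (b + 1) * m.descFactorial (b + 1) := by
      have e1 := Finset.sum_range_succ'
        (fun b => b * stirling2 i b * m.descFactorial b) (i + 1)
      have e2 := Finset.sum_range_succ
        (fun b => b * stirling2 i b * m.descFactorial b) (i + 1)
      simp only [Nat.zero_mul, Nat.add_zero, hgtop] at e1 e2
      rw [show (∑ b ∈ Finset.range (i + 1),
          (b + 1) * stirling2 i (b + 1) * m.descFactorial (b + 1))
        = ∑ b ∈ Finset.range (i + 1), b * stirling2 i b * m.descFactorial b from by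
          rw [← e1, e2]]
      exact Finset.sum_congr rfl fun b _ => by ring
    rw [hB, ← Finset.sum_add_distrib,
      Finset.sum_range_succ' (fun b => stirling2 (i + 1) b * m.descFactorial b) (i + 1),
      stirling2_zero_right]
    simp only [Nat.zero_mul, Nat.add_zero]
    refine Finset.sum_congr rfl fun b _ => ?_
    rw [stirling2_succ_succ]
    ring

lemma stirling2_pow_real (i l : ℕ) (hi : 1 ≤ i) :
    ((l : ℝ) + 1) ^ (i - 1)
      = ∑ b ∈ Finset.range i, (stirling2 i (b + 1) : ℝ) * (l.descFactorial b : ℝ) := by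
  obtain ⟨j, rfl⟩ : ∃ j, i = j + 1 := ⟨i - 1, by omega⟩
  have h := stirling2_pow (j + 1) (l + 1)
  rw [Finset.sum_range_succ'
      (fun b => stirling2 (j + 1) b * (l + 1).descFactorial b) (j + 1),
    stirling2_zero_right] at h
  simp only [Nat.succ_descFactorial_succ, Nat.zero_mul, Nat.add_zero] at h
  have h' : ((l : ℝ) + 1) * ((l : ℝ) + 1) ^ j
      = ((l : ℝ) + 1) * ∑ b ∈ Finset.range (j + 1),
          (stirling2 (j + 1) (b + 1) : ℝ) * (l.descFactorial b : ℝ) := by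
    have hc := congrArg (Nat.cast : ℕ → ℝ) h
    push_cast at hc
    rw [show ((l : ℝ) + 1) * ((l : ℝ) + 1) ^ j = ((l : ℝ) + 1) ^ (j + 1) by ring, hc,
      Finset.mul_sum]
    exact Finset.sum_congr rfl fun b _ => by ring
  have hl : ((l : ℝ) + 1) ≠ 0 := by positivity
  simpa using mul_left_cancel₀ hl h'

lemma aux_summable (j : ℕ) {c : ℝ} (h0 : 0 ≤ c) (h1 : c < 1) :
    Summable (fun l : ℕ => ((l : ℝ) + 1) ^ j * c ^ (l + 1)) := by
  have h := summable_pow_mul_geometric_of_norm_lt_one (R := ℝ) j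
    (r := c) (by rwa [Real.norm_eq_abs, abs_of_nonneg h0])
  have h2 := h.comp_injective (add_left_injective 1)
  refine h2.congr fun l => ?_
  simp only [Function.comp]
  push_cast
  ring

lemma aux_hasDerivAt (j l : ℕ) (q t : ℝ) :
    HasDerivAt (fun t => ((l : ℝ) + 1) ^ j * (q * Real.exp t) ^ (l + 1))
      (((l : ℝ) + 1) ^ (j + 1) * (q * Real.exp t) ^ (l + 1)) t := by
  have h := (((Real.hasDerivAt_exp t).const_mul q).pow (l + 1)).const_mul
    (((l : ℝ) + 1) ^ j)
  refine h.congr_deriv ?_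
  simp only [Nat.add_sub_cancel]
  push_cast
  ring

lemma tsum_descFactorial_geom (b : ℕ) {q : ℝ} (h0 : 0 ≤ q) (h1 : q < 1) :
    HasSum (fun l : ℕ => (l.descFactorial b : ℝ) * q ^ (l + 1))
      ((b.factorial : ℝ) * (q / (1 - q)) ^ (b + 1)) := by
  have hq : ‖q‖ < 1 := by rwa [Real.norm_eq_abs, abs_of_nonneg h0]
  have hne : (1 : ℝ) - q ≠ 0 := by linarith
  have H := (hasSum_choose_mul_geometric_of_norm_lt_one (𝕜 := ℝ) b hq).mul_left
    ((b.factorial : ℝ) * q ^ (b + 1))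
  have key : ∀ n : ℕ, ((b.factorial : ℝ) * q ^ (b + 1)) * (((n + b).choose b : ℝ) * q ^ n)
      = (((n + b).descFactorial b : ℝ)) * q ^ (n + b + 1) := by
    intro n
    rw [Nat.descFactorial_eq_factorial_mul_choose]
    push_cast
    ring
  have hval : (b.factorial : ℝ) * q ^ (b + 1) * (1 / (1 - q) ^ (b + 1))
      = (b.factorial : ℝ) * (q / (1 - q)) ^ (b + 1) := by
    rw [div_pow]
    ring
  have H2 : HasSum
      (fun n : ℕ => (fun l : ℕ => (l.descFactorial b : ℝ) * q ^ (l + 1)) (n + b))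
      ((b.factorial : ℝ) * (q / (1 - q)) ^ (b + 1)) := by
    rw [← hval]
    exact H.congr_fun fun n => (key n).symm
  have h3 := (hasSum_nat_add_iff
    (f := fun l : ℕ => (l.descFactorial b : ℝ) * q ^ (l + 1)) b).1 H2
  have hzero : ∑ l ∈ Finset.range b, ((l.descFactorial b : ℝ)) * q ^ (l + 1) = 0 :=
    Finset.sum_eq_zero fun i hi => by
      rw [Nat.descFactorial_eq_zero_iff_lt.2 (Finset.mem_range.1 hi)]
      simp
  rwa [hzero, add_zero] at h3

/-- Let `G` be geometric on `ℕ` with success probability `k/(k+θ)` where `θ > 0` and `k ≥ 1`.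
Then for every `i ≥ 1` the `i`-th cumulant of `G` equals
`Li_{1-i}(θ/(k+θ)) = ∑_{b=1}^{i} S(i,b) (θ/k)^b (b-1)!`. -/
theorem geometric_cumulants {Ω : Type*} [MeasurableSpace Ω] (μ : Measure Ω)
    [IsProbabilityMeasure μ] (θ : ℝ) (hθ : 0 < θ) (k : ℕ) (hk : 1 ≤ k)
    (G : Ω → ℕ)
    (hgeom : ∀ m : ℕ,
      μ {ω | G ω = m} = ENNReal.ofReal ((k / (k + θ)) * (θ / (k + θ)) ^ m))
    (i : ℕ) (hi : 1 ≤ i) :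
    iteratedDeriv i (cgf (fun ω => (G ω : ℝ)) μ) 0
        = ∑' l : ℕ, ((l : ℝ) + 1) ^ (i - 1) * (θ / (k + θ)) ^ (l + 1)
      ∧ iteratedDeriv i (cgf (fun ω => (G ω : ℝ)) μ) 0
        = ∑ b ∈ Finset.Icc 1 i,
            (stirling2 i b : ℝ) * (θ / k) ^ b * Nat.factorial (b - 1) := by
  classical
  set X : Ω → ℝ := fun ω => (G ω : ℝ) with hX
  have hk0 : (0:ℝ) < k := by
    have : 0 < k := by omega
    exact_mod_cast this
  have hkθ : (0:ℝ) < (k:ℝ) + θ := by positivity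
  set p : ℝ := (k:ℝ) / ((k:ℝ) + θ) with hpdef
  set q : ℝ := θ / ((k:ℝ) + θ) with hqdef
  have hp0 : 0 < p := div_pos hk0 hkθ
  have hq0 : 0 < q := div_pos hθ hkθ
  have hpq : p + q = 1 := by rw [hpdef, hqdef, ← add_div, div_self hkθ.ne']
  have hq1 : q < 1 := by linarith
  have h1q : 1 - q = p := by linarith
  have hgsum : Summable (fun m : ℕ => p * q ^ m) :=
    ((hasSum_geometric_of_lt_one hq0.le hq1).mul_left p).summable
  have htot : ∑' m : ℕ, ENNReal.ofReal (p * q ^ m) = 1 := by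
    rw [← ENNReal.ofReal_tsum_of_nonneg (fun m => by positivity) hgsum,
      ((hasSum_geometric_of_lt_one hq0.le hq1).mul_left p).tsum_eq, h1q,
      mul_inv_cancel₀ hp0.ne', ENNReal.ofReal_one]
  -- null measurability of the level sets
  have hnm : ∀ m : ℕ, NullMeasurableSet {ω | G ω = m} μ := by
    intro m
    set A := {ω | G ω = m} with hA
    have hle : μ A + μ Aᶜ ≤ 1 := by
      have hsub : Aᶜ ⊆ ⋃ n, (if n = m then (∅ : Set Ω) else {ω | G ω = n}) := by
        intro ω hω
        refine Set.mem_iUnion.2 ⟨G ω, ?_⟩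
        have hne : ¬ (G ω = m) := hω
        simp [hne]
      have h1 : μ Aᶜ ≤ ∑' n, μ (if n = m then (∅ : Set Ω) else {ω | G ω = n}) :=
        (measure_mono hsub).trans (measure_iUnion_le _)
      have h2 : μ A + ∑' n, μ (if n = m then (∅ : Set Ω) else {ω | G ω = n}) = 1 := by
        have he : ∀ n, μ (if n = m then (∅ : Set Ω) else {ω | G ω = n})
            = if n = m then 0 else μ {ω | G ω = n} := by
          intro n; split <;> simp
        calc μ A + ∑' n, μ (if n = m then (∅ : Set Ω) else {ω | G ω = n})
            = μ {ω | G ω = m} + ∑' n, if n = m then 0 else μ {ω | G ω = n} := by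
              rw [tsum_congr he]
          _ = ∑' n, μ {ω | G ω = n} := by
              rw [ENNReal.tsum_eq_add_tsum_ite (f := fun n => μ {ω | G ω = n}) m]
              congr 1
              exact tsum_congr fun n => by by_cases h : n = m <;> simp [h]
          _ = ∑' n, ENNReal.ofReal (p * q ^ n) := tsum_congr fun n => hgeom n
          _ = 1 := htot
      calc μ A + μ Aᶜ ≤ μ A + ∑' n, μ (if n = m then (∅ : Set Ω) else {ω | G ω = n}) :=
            add_le_add_right h1 _
        _ = 1 := h2
    have htu : μ (toMeasurable μ A ∪ toMeasurable μ Aᶜ) = 1 := by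
      have huniv : toMeasurable μ A ∪ toMeasurable μ Aᶜ = Set.univ := by
        apply Set.eq_univ_of_univ_subset
        intro ω _
        rcases Classical.em (ω ∈ A) with h | h
        · exact Or.inl (subset_toMeasurable μ A h)
        · exact Or.inr (subset_toMeasurable μ Aᶜ h)
      rw [huniv, measure_univ]
    have hint0 : μ (toMeasurable μ A ∩ toMeasurable μ Aᶜ) = 0 := by
      have h := measure_union_add_inter (μ := μ) (toMeasurable μ A)
        (measurableSet_toMeasurable μ Aᶜ)
      rw [htu, measure_toMeasurable, measure_toMeasurable] at h
      have h' : 1 + μ (toMeasurable μ A ∩ toMeasurable μ Aᶜ) ≤ 1 + 0 := by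
        rw [add_zero]; rw [h]; exact hle
      have h'' := ENNReal.le_of_add_le_add_left (by simp : (1:ℝ≥0∞) ≠ ⊤) h'
      exact le_antisymm h'' zero_le
    have hAt : A =ᵐ[μ] toMeasurable μ A := by
      rw [MeasureTheory.ae_eq_set]
      constructor
      · rw [Set.diff_eq_empty.2 (subset_toMeasurable μ A)]; simp
      · refine measure_mono_null ?_ hint0
        intro ω hω
        exact ⟨hω.1, subset_toMeasurable μ Aᶜ hω.2⟩
    exact ((measurableSet_toMeasurable μ A).nullMeasurableSet).congr hAt.symm
  have hGnm : NullMeasurable G μ := by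
    intro s hs
    have hps : G ⁻¹' s = ⋃ m ∈ s, {ω | G ω = m} := by
      ext ω
      simp only [Set.mem_preimage, Set.mem_iUnion, Set.mem_setOf_eq]
      exact ⟨fun h => ⟨G ω, h, rfl⟩, fun ⟨m, hm, he⟩ => he ▸ hm⟩
    rw [hps]
    exact NullMeasurableSet.biUnion s.to_countable (fun m _ => hnm m)
  have hGae : AEMeasurable G μ := hGnm.aemeasurable
  set ν := μ.map G with hν
  have hmap : ∀ m : ℕ, ν {m} = ENNReal.ofReal (p * q ^ m) := by
    intro m
    rw [hν, Measure.map_apply_of_aemeasurable hGae (measurableSet_singleton m)]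
    exact hgeom m
  -- the mgf
  have hmgf : ∀ t : ℝ, q * Real.exp t < 1 → mgf X μ t = p * (1 - q * Real.exp t)⁻¹ := by
    intro t hct
    have hc0 : 0 ≤ q * Real.exp t := by positivity
    have hfm : AEStronglyMeasurable (fun n : ℕ => Real.exp (t * n)) ν :=
      measurable_from_top.aestronglyMeasurable
    have hS := (hasSum_geometric_of_lt_one hc0 hct).mul_left p
    have hterm : ∀ n : ℕ, p * (q * Real.exp t) ^ n = p * q ^ n * Real.exp (t * n) := by
      intro n
      rw [mul_comm t (n:ℝ), Real.exp_nat_mul, mul_pow]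
      ring
    have hsum2 : Summable (fun n : ℕ => p * q ^ n * Real.exp (t * n)) :=
      hS.summable.congr fun n => hterm n
    have hInt : Integrable (fun n : ℕ => Real.exp (t * n)) ν := by
      refine ⟨hfm, ?_⟩
      rw [hasFiniteIntegral_iff_norm, lintegral_countable']
      have he : ∀ n : ℕ, ENNReal.ofReal ‖Real.exp (t * n)‖ * ν {n}
          = ENNReal.ofReal (p * q ^ n * Real.exp (t * n)) := by
        intro n
        rw [hmap n, Real.norm_eq_abs, abs_of_pos (Real.exp_pos _),
          ← ENNReal.ofReal_mul (Real.exp_pos _).le]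
        ring_nf
      rw [tsum_congr he, ← ENNReal.ofReal_tsum_of_nonneg (fun n => by positivity) hsum2]
      exact ENNReal.ofReal_lt_top
    have hi1 : mgf X μ t = ∫ n : ℕ, Real.exp (t * n) ∂ν := by
      rw [mgf, hν]
      exact (integral_map hGae hfm).symm
    rw [hi1, integral_countable' hInt]
    have he2 : ∀ n : ℕ, (ν {n}).toReal • Real.exp (t * n) = p * (q * Real.exp t) ^ n := by
      intro n
      rw [hmap n, ENNReal.toReal_ofReal (by positivity), smul_eq_mul]
      exact (hterm n).symm
    simp only [measureReal_def]
    rw [tsum_congr he2, hS.tsum_eq]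
  -- the interval
  set δ : ℝ := -Real.log q / 2 with hδdef
  have hlogq : Real.log q < 0 := Real.log_neg hq0 hq1
  have hδ : 0 < δ := by rw [hδdef]; linarith
  have hqδ : q * Real.exp δ < 1 := by
    have h1 : δ < -Real.log q := by rw [hδdef]; linarith
    have h2 : Real.exp (-Real.log q) = q⁻¹ := by rw [Real.exp_neg, Real.exp_log hq0]
    calc q * Real.exp δ < q * Real.exp (-Real.log q) :=
          mul_lt_mul_of_pos_left (Real.exp_lt_exp.2 h1) hq0
      _ = 1 := by rw [h2, mul_inv_cancel₀ hq0.ne']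
  have hmem : ∀ t ∈ Set.Ioo (-δ) δ, 0 ≤ q * Real.exp t ∧ q * Real.exp t < 1 := by
    intro t ht
    refine ⟨by positivity, ?_⟩
    exact lt_trans (mul_lt_mul_of_pos_left (Real.exp_lt_exp.2 ht.2) hq0) hqδ
  have h0mem : (0:ℝ) ∈ Set.Ioo (-δ) δ := ⟨by linarith, hδ⟩
  set φ : ℝ → ℝ := fun t => Real.log p - Real.log (1 - q * Real.exp t) with hφ
  have hcgf : Set.EqOn (cgf X μ) φ (Set.Ioo (-δ) δ) := by
    intro t ht
    obtain ⟨hc0, hc1⟩ := hmem t ht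
    have h1 : 0 < 1 - q * Real.exp t := by linarith
    rw [cgf, hmgf t hc1]
    show Real.log (p * (1 - q * Real.exp t)⁻¹)
      = Real.log p - Real.log (1 - q * Real.exp t)
    rw [Real.log_mul hp0.ne' (inv_ne_zero h1.ne'), Real.log_inv]
    ring
  set F : ℕ → ℝ → ℝ :=
    fun j t => ∑' l : ℕ, ((l:ℝ)+1)^j * (q * Real.exp t)^(l+1) with hF
  have hFderiv : ∀ (j : ℕ), ∀ t ∈ Set.Ioo (-δ) δ, HasDerivAt (F j) (F (j+1) t) t := by
    intro j t ht
    rw [hF]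
    refine hasDerivAt_tsum_of_isPreconnected
      (u := fun l : ℕ => ((l:ℝ)+1)^(j+1) * (q * Real.exp δ)^(l+1))
      (aux_summable (j+1) (by positivity) hqδ) isOpen_Ioo isPreconnected_Ioo
      (fun l y _ => aux_hasDerivAt j l q y) ?_ h0mem ?_ ht
    · intro l y hy
      obtain ⟨hc0, _⟩ := hmem y hy
      rw [Real.norm_eq_abs, abs_of_nonneg (by positivity)]
      refine mul_le_mul_of_nonneg_left (pow_le_pow_left₀ hc0 ?_ _) (by positivity)
      exact mul_le_mul_of_nonneg_left (Real.exp_le_exp.2 hy.2.le) hq0.le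
    · exact aux_summable j (c := q * Real.exp 0) (by positivity) (by simpa using hq1)
  have hDphi : ∀ t ∈ Set.Ioo (-δ) δ, HasDerivAt φ (F 0 t) t := by
    intro t ht
    obtain ⟨hc0, hc1⟩ := hmem t ht
    have h1 : 0 < 1 - q * Real.exp t := by linarith
    have hd : HasDerivAt (fun y => 1 - q * Real.exp y) (-(q * Real.exp t)) t := by
      simpa using ((Real.hasDerivAt_exp t).const_mul q).const_sub 1
    have hlog := (Real.hasDerivAt_log h1.ne').comp t hd
    have hres := hlog.const_sub (Real.log p)
    have hval : F 0 t = q * Real.exp t * (1 - q * Real.exp t)⁻¹ := by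
      show (∑' l : ℕ, ((l:ℝ)+1)^0 * (q * Real.exp t)^(l+1)) = _
      have he : ∀ l : ℕ, ((l:ℝ)+1)^0 * (q * Real.exp t)^(l+1)
          = (q * Real.exp t) * (q * Real.exp t)^l := by
        intro l; rw [pow_zero, one_mul, pow_succ']
      rw [tsum_congr he, tsum_mul_left, tsum_geometric_of_lt_one hc0 hc1]
    rw [hval]
    refine hres.congr_deriv ?_
    ring
  have hiter : ∀ j : ℕ, ∀ t ∈ Set.Ioo (-δ) δ,
      iteratedDeriv (j+1) (cgf X μ) t = F j t := by
    intro j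
    induction j with
    | zero =>
      intro t ht
      rw [iteratedDeriv_one,
        Filter.EventuallyEq.deriv_eq
          (Filter.eventuallyEq_of_mem (isOpen_Ioo.mem_nhds ht) hcgf)]
      exact (hDphi t ht).deriv
    | succ j ih =>
      intro t ht
      rw [iteratedDeriv_succ,
        Filter.EventuallyEq.deriv_eq
          (Filter.eventuallyEq_of_mem (isOpen_Ioo.mem_nhds ht) ih)]
      exact (hFderiv j t ht).deriv
  obtain ⟨j, rfl⟩ : ∃ j, i = j + 1 := ⟨i - 1, by omega⟩
  have hmain : iteratedDeriv (j+1) (cgf X μ) 0 = F j 0 := hiter j 0 h0mem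
  have hF0 : F j 0 = ∑' l : ℕ, ((l:ℝ)+1)^j * q^(l+1) := by
    rw [hF]
    exact tsum_congr fun l => by rw [Real.exp_zero, mul_one]
  constructor
  · rw [hmain, hF0]
    simp only [Nat.add_sub_cancel]
  · rw [hmain, hF0]
    have hstep1 : ∀ l : ℕ, ((l:ℝ)+1)^j * q^(l+1)
        = ∑ b ∈ Finset.range (j+1),
            (stirling2 (j+1) (b+1) : ℝ) * ((l.descFactorial b : ℝ) * q^(l+1)) := by
      intro l
      rw [show ((l:ℝ)+1)^j = ((l:ℝ)+1)^((j+1)-1) by norm_num,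
        stirling2_pow_real (j+1) l (by omega), Finset.sum_mul]
      exact Finset.sum_congr rfl fun b _ => by ring
    rw [tsum_congr hstep1,
      Summable.tsum_finsetSum (fun b _ => ((tsum_descFactorial_geom b hq0.le hq1).summable.mul_left _))]
    have hθk : q / (1 - q) = θ / k := by
      rw [h1q, hqdef, hpdef]
      rw [div_div_div_cancel_right₀]
      exact hkθ.ne'
    have hsum3 : ∀ b ∈ Finset.range (j+1),
        (∑' l : ℕ, (stirling2 (j+1) (b+1) : ℝ) * ((l.descFactorial b : ℝ) * q^(l+1)))
        = (stirling2 (j+1) (b+1) : ℝ) * ((b.factorial : ℝ) * (θ/(k:ℝ))^(b+1)) := by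
      intro b _
      rw [((tsum_descFactorial_geom b hq0.le hq1).mul_left _).tsum_eq, hθk]
    rw [Finset.sum_congr rfl hsum3, ← Finset.Ico_add_one_right_eq_Icc, Finset.sum_Ico_eq_sum_range]
    simp only [Nat.add_sub_cancel, Nat.succ_sub_one]
    refine Finset.sum_congr rfl fun b _ => ?_
    rw [add_comm 1 b]
    simp only [Nat.add_sub_cancel]
    ring
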